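/- Let n be a positive integer. The group ⟨u, v | uvu⁻¹ = v⁻¹, u^(2n) v = 1⟩ is cyclic of order 4n. -/

import Mathlib

/-- Relators for the group `⟨u, v | u v u⁻¹ = v⁻¹, u^(2n) v^ℓ = 1⟩`. -/
def kleinQuotRels (n ℓ : ℤ) : Set (FreeGroup (Fin 2)) :=
  {FreeGroup.of 0 * FreeGroup.of 1 * (FreeGroup.of 0)⁻¹ * FreeGroup.of 1,
    (FreeGroup.of 0) ^ (2 * n) * (FreeGroup.of 1) ^ ℓ}

/-- The group `⟨u, v | u v u⁻¹ = v⁻¹, u^(2n) v^ℓ = 1⟩`. -/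
abbrev KleinQuot (n ℓ : ℤ) : Type := PresentedGroup (kleinQuotRels n ℓ)

def KleinQuot.u (n ℓ : ℤ) : KleinQuot n ℓ := PresentedGroup.of 0
def KleinQuot.v (n ℓ : ℤ) : KleinQuot n ℓ := PresentedGroup.of 1

section aux

variable (n : ℤ)

local notation "G" => KleinQuot n 1
local notation "u" => KleinQuot.u n 1
local notation "v" => KleinQuot.v n 1

lemma kleinQuot_rel_one : (u : G) * v * u⁻¹ * v = 1 := by
  have h : (PresentedGroup.mk (kleinQuotRels n 1)
      (FreeGroup.of 0 * FreeGroup.of 1 * (FreeGroup.of 0)⁻¹ * FreeGroup.of 1) : G) = 1 := by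
    refine (QuotientGroup.eq_one_iff _).mpr (Subgroup.subset_normalClosure ?_)
    exact Or.inl rfl
  simpa [map_mul, map_inv, KleinQuot.u, KleinQuot.v, PresentedGroup.of] using h

lemma kleinQuot_rel_two : (u : G) ^ (2 * n) * v = 1 := by
  have h : (PresentedGroup.mk (kleinQuotRels n 1)
      ((FreeGroup.of 0) ^ (2 * n) * (FreeGroup.of 1) ^ (1 : ℤ)) : G) = 1 := by
    refine (QuotientGroup.eq_one_iff _).mpr (Subgroup.subset_normalClosure ?_)
    exact Or.inr rfl
  simpa [map_mul, map_zpow, KleinQuot.u, KleinQuot.v, PresentedGroup.of] using h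

lemma kleinQuot_v_eq : (v : G) = u ^ (-(2 * n)) := by
  have h := kleinQuot_rel_two n
  rw [zpow_neg]
  exact (mul_eq_one_iff_inv_eq.mp h).symm

lemma kleinQuot_u_pow : (u : G) ^ (4 * n) = 1 := by
  have h1 := kleinQuot_rel_one n
  rw [kleinQuot_v_eq n] at h1
  have key : (u : G) * u ^ (-(2 * n)) * u⁻¹ * u ^ (-(2 * n)) = u ^ (-(4 * n)) := by
    group
  rw [key] at h1
  calc (u : G) ^ (4 * n) = (u ^ (-(4 * n)))⁻¹ := by rw [← zpow_neg, neg_neg]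
    _ = 1 := by rw [h1, inv_one]

end aux

/-- For `n > 0`, the group `⟨u, v | u v u⁻¹ = v⁻¹, u^(2n) v = 1⟩` is cyclic
of order `4n`. -/
theorem kleinQuot_cyclic (n : ℕ) (hn : 0 < n) :
    Nonempty (KleinQuot n 1 ≃* Multiplicative (ZMod (4 * n))) := by
  set m : ℕ := 4 * n with hm
  set G := KleinQuot n 1
  set u := KleinQuot.u n 1
  set v := KleinQuot.v n 1
  -- forward map
  set f : Fin 2 → Multiplicative (ZMod m) :=
    ![Multiplicative.ofAdd ((1 : ℤ) : ZMod m),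
      Multiplicative.ofAdd ((-(2 * n) : ℤ) : ZMod m)] with hf
  have hrels : ∀ r ∈ kleinQuotRels n 1, FreeGroup.lift f r = 1 := by
    rintro r (rfl | rfl)
    · show FreeGroup.lift f (FreeGroup.of 0 * FreeGroup.of 1 * (FreeGroup.of 0)⁻¹ * FreeGroup.of 1) = 1
      simp only [map_mul, map_inv, FreeGroup.lift_apply_of, hf, Matrix.cons_val_zero,
        Matrix.cons_val_one, Matrix.head_cons]
      rw [← ofAdd_neg, ← ofAdd_add, ← ofAdd_add, ← ofAdd_add]
      rw [show (1 : Multiplicative (ZMod m)) = Multiplicative.ofAdd ((0 : ℤ) : ZMod m) by simp]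
      congr 1
      push_cast
      rw [show ((1 : ZMod m) + (-(2*(n:ZMod m))) + (-1) + (-(2*(n:ZMod m)))) = -((4*n : ℕ) : ZMod m) by push_cast; ring]
      simp [hm]
    · show FreeGroup.lift f ((FreeGroup.of 0) ^ (2*(n:ℤ)) * (FreeGroup.of 1) ^ (1:ℤ)) = 1
      simp only [map_mul, map_zpow, FreeGroup.lift_apply_of, hf, Matrix.cons_val_zero,
        Matrix.cons_val_one, Matrix.head_cons]
      rw [← ofAdd_zsmul, ← ofAdd_zsmul, ← ofAdd_add]
      rw [show (1 : Multiplicative (ZMod m)) = Multiplicative.ofAdd ((0 : ZMod m)) by simp]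
      congr 1
      simp only [zsmul_eq_mul]
      push_cast
      ring
  set φ : G →* Multiplicative (ZMod m) := PresentedGroup.toGroup hrels with hφ
  -- backward map
  have hu4 : u ^ ((m : ℤ)) = 1 := by
    have h := kleinQuot_u_pow (n : ℤ)
    have hmz : ((m : ℤ)) = 4 * (n : ℤ) := by rw [hm]; push_cast; ring
    rw [hmz]; exact h
  set ψ' : ZMod m →+ Additive G :=
    ZMod.lift m ⟨MonoidHom.toAdditiveRight (zpowersHom G u), by
      simpa [zpowersHom] using congrArg Additive.ofMul hu4⟩ with hψ'
  set ψ : Multiplicative (ZMod m) →* G := AddMonoidHom.toMultiplicativeLeft ψ' with hψ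
  have hψ_int : ∀ k : ℤ, ψ (Multiplicative.ofAdd ((k : ZMod m))) = u ^ k := by
    intro k
    simp [hψ, hψ', zpowersHom]
  have hφu : φ u = Multiplicative.ofAdd ((1 : ℤ) : ZMod m) := by
    show φ (PresentedGroup.of 0) = _
    rw [hφ, PresentedGroup.toGroup.of]
    simp [hf]
  have hφv : φ v = Multiplicative.ofAdd ((-(2 * n) : ℤ) : ZMod m) := by
    show φ (PresentedGroup.of 1) = _
    rw [hφ, PresentedGroup.toGroup.of]
    simp [hf]
  have h1 : ψ.comp φ = MonoidHom.id G := by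
    apply PresentedGroup.ext
    intro x
    fin_cases x
    · show ψ (φ u) = u
      rw [hφu, hψ_int 1, zpow_one]
    · show ψ (φ v) = v
      rw [hφv, hψ_int]
      exact (kleinQuot_v_eq (n : ℤ)).symm
  have h2 : φ.comp ψ = MonoidHom.id _ := by
    refine MonoidHom.ext fun x => ?_
    obtain ⟨k, hk⟩ := ZMod.intCast_surjective (n := m) (Multiplicative.toAdd x)
    have hx : x = Multiplicative.ofAdd ((k : ZMod m)) := by rw [hk]; simp
    rw [hx]
    show φ (ψ (Multiplicative.ofAdd ((k : ZMod m)))) = _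
    rw [hψ_int, map_zpow, hφu, ← ofAdd_zsmul]
    simp
  exact ⟨MonoidHom.toMulEquiv φ ψ h1 h2⟩
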